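/- arXiv:2605.11449 — 2 statements merged into one kernel-verified Lean document; each statement's English description precedes it below -/
import Mathlib

section
/- For any subset Δ_P ⊆ Δ of the simple roots of a finite crystallographic root system Φ with Δ_P ≠ Δ, one has |Δ \ Δ_P| · ( gcd_{β ∈ Δ \ Δ_P} ( Σ_{α ∈ Φ^+ \ Φ_{Δ_P}^+} ⟨α, β^∨⟩ ) − 1 ) ≤ |Φ^+ \ Φ_{Δ_P}^+|. -/
open scoped Classical RealInnerProductSpace

noncomputable section

variable {n d : ℕ}

/-- The pairing `⟨β, γ^∨⟩ = 2(β,γ)/(γ,γ)` of a vector with a coroot. -/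
def rsPair (β γ : EuclideanSpace ℝ (Fin d)) : ℝ := 2 * ⟪β, γ⟫ / ⟪γ, γ⟫

/-- The coroot `γ^∨ = 2γ/(γ,γ)`. -/
def rsCoroot (γ : EuclideanSpace ℝ (Fin d)) : EuclideanSpace ℝ (Fin d) :=
  (2 / ⟪γ, γ⟫) • γ

/-- `⟨·, γ^∨⟩` as a linear functional. -/
def corootForm (γ : EuclideanSpace ℝ (Fin d)) : EuclideanSpace ℝ (Fin d) →ₗ[ℝ] ℝ where
  toFun x := 2 * ⟪x, γ⟫ / ⟪γ, γ⟫
  map_add' x y := by simp only [inner_add_left]; ring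
  map_smul' c x := by simp only [real_inner_smul_left, RingHom.id_apply, smul_eq_mul]; ring

/-- A finite reduced crystallographic root system in the Euclidean space `ℝ^d`, together with a
chosen base of simple roots `α 0, …, α (n-1)`: every root is an integral linear combination of
the simple roots with all coefficients nonnegative or all nonpositive. -/
structure RootSystemBase (n d : ℕ) : Type where
  Φ : Finset (EuclideanSpace ℝ (Fin d))
  α : Fin n → EuclideanSpace ℝ (Fin d)
  α_mem : ∀ i, α i ∈ Φ
  nonzero : ∀ β ∈ Φ, β ≠ 0
  reduced : ∀ β ∈ Φ, ∀ t : ℝ, t • β ∈ Φ → t = 1 ∨ t = -1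
  crystallographic : ∀ β ∈ Φ, ∀ γ ∈ Φ, ∃ k : ℤ, rsPair β γ = (k : ℝ)
  reflClosed : ∀ β ∈ Φ, ∀ γ ∈ Φ, β - rsPair β γ • γ ∈ Φ
  indep : LinearIndependent ℝ α
  base : ∀ β ∈ Φ, ∃ c : Fin n → ℤ,
    β = ∑ i, (c i : ℝ) • α i ∧ ((∀ i, 0 ≤ c i) ∨ (∀ i, c i ≤ 0))

/-- The extended space `E' = E ⊕ ℝ^I`. -/
abbrev ExtSp (n d : ℕ) (I : Finset (Fin n)) : Type :=
  EuclideanSpace ℝ (Fin d) × ({p : Fin n // p ∈ I} → ℝ)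

/-- The total source vector `β = ∑_{p ∈ I} β_p` in the extended space. -/
def betaVec (n d : ℕ) (I : Finset (Fin n)) : ExtSp n d I := (0, fun _ => 1)

namespace RootSystemBase

variable (R : RootSystemBase n d)

lemma alpha_ne_zero (i : Fin n) : R.α i ≠ 0 := R.nonzero _ (R.α_mem i)

lemma inner_alpha_ne_zero (i : Fin n) : ⟪R.α i, R.α i⟫ ≠ 0 := fun h =>
  R.alpha_ne_zero i ((inner_self_eq_zero (𝕜 := ℝ)).mp h)

lemma corootForm_alpha_self (i : Fin n) : corootForm (R.α i) (R.α i) = 2 := by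
  have h2 := R.inner_alpha_ne_zero i
  show 2 * ⟪R.α i, R.α i⟫ / ⟪R.α i, R.α i⟫ = 2
  rw [mul_div_assoc, div_self h2, mul_one]

/-- The simple reflection `s_i : x ↦ x - ⟨x, α_i^∨⟩ α_i` as a linear automorphism of `E`. -/
def sRefl (i : Fin n) :
    EuclideanSpace ℝ (Fin d) ≃ₗ[ℝ] EuclideanSpace ℝ (Fin d) :=
  Module.reflection (R.corootForm_alpha_self i)

/-- The Weyl group `W`, as the subgroup of linear automorphisms of `E` generated by the
simple reflections. -/
def weyl : Subgroup (EuclideanSpace ℝ (Fin d) ≃ₗ[ℝ] EuclideanSpace ℝ (Fin d)) :=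
  Subgroup.closure (Set.range R.sRefl)

/-- `wordProd [i₁, …, i_t] = s_{i₁} ⋯ s_{i_t}`. -/
def wordProd (l : List (Fin n)) :
    EuclideanSpace ℝ (Fin d) ≃ₗ[ℝ] EuclideanSpace ℝ (Fin d) :=
  (l.map R.sRefl).prod

/-- The Weyl group element `s_{i_t} ⋯ s_{i_1}` associated to the firing sequence
`(i_1, …, i_t)`. -/
def seqProd (l : List (Fin n)) :
    EuclideanSpace ℝ (Fin d) ≃ₗ[ℝ] EuclideanSpace ℝ (Fin d) :=
  (l.reverse.map R.sRefl).prod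

/-- The length function `ℓ` of the Coxeter system `(W, S)`: the minimal number of simple
reflections needed to express `w`. -/
def len (w : EuclideanSpace ℝ (Fin d) ≃ₗ[ℝ] EuclideanSpace ℝ (Fin d)) : ℕ :=
  sInf {t | ∃ l : List (Fin n), l.length = t ∧ R.wordProd l = w}

/-- The set `W^J` of minimal length representatives of `W/W_J`, for `J = S \ {s_i : i ∈ I}`:
those `w ∈ W` with `ℓ(w s_j) > ℓ(w)` for all `j ∉ I`. -/
def minReps (I : Finset (Fin n)) :
    Set (EuclideanSpace ℝ (Fin d) ≃ₗ[ℝ] EuclideanSpace ℝ (Fin d)) :=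
  {w | w ∈ R.weyl ∧ ∀ j, j ∉ I → R.len w < R.len (w * R.sRefl j)}

/-- The Cartan matrix `a_{uv} = ⟨α_u, α_v^∨⟩` (an integer by crystallinity). -/
def cartan (u v : Fin n) : ℤ := ⌊rsPair (R.α u) (R.α v)⌋

/-- The set `Φ⁺` of positive roots. -/
def posRoots : Finset (EuclideanSpace ℝ (Fin d)) :=
  R.Φ.filter fun β => ∃ c : Fin n → ℤ, β = ∑ i, (c i : ℝ) • R.α i ∧ ∀ i, 0 ≤ c i

/-- The set `Φ_P⁺` of positive roots lying in the span of the simple roots `α_j`, `j ∈ P`. -/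
def parPos (P : Finset (Fin n)) : Finset (EuclideanSpace ℝ (Fin d)) :=
  R.posRoots.filter fun β => β ∈ Submodule.span ℝ (R.α '' (P : Set (Fin n)))

/-- `∑_{u ≠ v} (−a_{uv}) c_u + [v ∈ I]`. -/
def chipBound (I : Finset (Fin n)) (c : Fin n → ℤ) (v : Fin n) : ℤ :=
  (∑ u ∈ Finset.univ.erase v, -(R.cartan u v) * c u) + (if v ∈ I then 1 else 0)

/-- Vertex `v` is sad in the configuration `c` (Modified Kostant Game with active set `I`). -/
def Sad (I : Finset (Fin n)) (c : Fin n → ℤ) (v : Fin n) : Prop :=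
  2 * c v < R.chipBound I c v

/-- Firing vertex `v`. -/
def fire (I : Finset (Fin n)) (c : Fin n → ℤ) (v : Fin n) : Fin n → ℤ :=
  Function.update c v (R.chipBound I c v - c v)

end RootSystemBase

/-- `ValidFrom R I c l`: starting from the configuration `c`, the sequence `l` fires a sad
vertex at each step. -/
def RootSystemBase.ValidFrom (R : RootSystemBase n d) (I : Finset (Fin n)) :
    (Fin n → ℤ) → List (Fin n) → Prop
  | _, [] => True
  | c, v :: l => R.Sad I c v ∧ RootSystemBase.ValidFrom R I (R.fire I c v) l

namespace RootSystemBase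

variable (R : RootSystemBase n d)

/-- A valid firing sequence: starts at the zero configuration and fires a sad vertex at
each step. -/
def Valid (I : Finset (Fin n)) (l : List (Fin n)) : Prop := R.ValidFrom I 0 l

/-- The configuration reached after playing the sequence `l` from the zero configuration. -/
def play (I : Finset (Fin n)) (l : List (Fin n)) : Fin n → ℤ :=
  l.foldl (R.fire I) 0

/-- A maximal valid firing sequence: no vertex is sad in the final configuration. -/
def MaximalSeq (I : Finset (Fin n)) (l : List (Fin n)) : Prop :=
  R.Valid I l ∧ ∀ v, ¬ R.Sad I (R.play I l) v

/-- The (integer) coefficients of a vector in the basis of simple coroots, when they exist. -/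
def corootCoeffs (x : EuclideanSpace ℝ (Fin d)) : Fin n → ℤ :=
  if h : ∃ k : Fin n → ℤ, x = ∑ j, (k j : ℝ) • rsCoroot (R.α j) then h.choose else 0

/-- The `I`-height of a (co)vector: the sum over `j ∈ I` of its coefficients in the basis
of simple coroots. -/
def htI (I : Finset (Fin n)) (x : EuclideanSpace ℝ (Fin d)) : ℤ :=
  ∑ j ∈ I, R.corootCoeffs x j

end RootSystemBase

/-- The extended pairing `⟨·, α_i^∨⟩` on `E' = E ⊕ ℝ^I`, determined by
`⟨β_p, α_i^∨⟩ = −δ_{pi}`, as a linear functional. -/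
def extForm (R : RootSystemBase n d) (I : Finset (Fin n)) (i : Fin n) :
    ExtSp n d I →ₗ[ℝ] ℝ :=
  (corootForm (R.α i)).comp (LinearMap.fst ℝ _ _) -
    (if h : i ∈ I then
      (LinearMap.proj (R := ℝ) (φ := fun _ : {p : Fin n // p ∈ I} => ℝ) ⟨i, h⟩).comp
        (LinearMap.snd ℝ _ _)
    else 0)

namespace RootSystemBase

variable (R : RootSystemBase n d)

lemma extForm_apply (I : Finset (Fin n)) (i : Fin n) (x : ExtSp n d I) :
    extForm R I i x = corootForm (R.α i) x.1 - (if h : i ∈ I then x.2 ⟨i, h⟩ else 0) := by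
  by_cases h : i ∈ I <;> simp [extForm, h]

lemma extForm_alpha (I : Finset (Fin n)) (i : Fin n) :
    extForm R I i ((R.α i, 0) : ExtSp n d I) = 2 := by
  rw [R.extForm_apply]
  simp [R.corootForm_alpha_self i]

/-- The simple reflection `s_i : x ↦ x − ⟨x, α_i^∨⟩ α_i` on the extended space `E'`. -/
def extRefl (I : Finset (Fin n)) (i : Fin n) : ExtSp n d I ≃ₗ[ℝ] ExtSp n d I :=
  Module.reflection (R.extForm_alpha I i)

/-- The extended pairing `⟨x, α_i^∨⟩` for `x ∈ E'`. -/
def extPair (I : Finset (Fin n)) (x : ExtSp n d I) (i : Fin n) : ℝ := extForm R I i x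

/-- The action of `s_{i_t} ⋯ s_{i_1}` on the extended space `E'`. -/
def extSeqProd (I : Finset (Fin n)) (l : List (Fin n)) : ExtSp n d I ≃ₗ[ℝ] ExtSp n d I :=
  (l.reverse.map (R.extRefl I)).prod

end RootSystemBase

section Statement16Aux

variable {n d : ℕ}

local notation "EV" => EuclideanSpace ℝ (Fin d)

lemma s16_inner_self_pos {x : EV} (hx : x ≠ 0) : 0 < ⟪x, x⟫ :=
  lt_of_le_of_ne real_inner_self_nonneg fun h => hx (inner_self_eq_zero.mp h.symm)

lemma rsPair_eq_corootForm (x γ : EV) : rsPair x γ = corootForm γ x := rfl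

lemma rsPair_self {x : EV} (hx : x ≠ 0) : rsPair x x = 2 := by
  have h := s16_inner_self_pos hx
  show 2 * ⟪x, x⟫ / ⟪x, x⟫ = 2
  rw [mul_div_assoc, div_self h.ne', mul_one]

namespace RootSystemBase

variable (R : RootSystemBase n d)

/-- integrality: the pairing of two roots is the cast of its floor. -/
lemma zPair_cast {x y : EV} (hx : x ∈ R.Φ) (hy : y ∈ R.Φ) :
    ((⌊rsPair x y⌋ : ℤ) : ℝ) = rsPair x y := by
  obtain ⟨k, hk⟩ := R.crystallographic x hx y hy
  rw [hk, Int.floor_intCast]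

lemma neg_mem {x : EV} (hx : x ∈ R.Φ) : -x ∈ R.Φ := by
  have h := R.reflClosed x hx x hx
  rw [rsPair_self (R.nonzero x hx)] at h
  have : x - (2 : ℝ) • x = -x := by
    rw [two_smul]; abel
  rwa [this] at h

lemma coeff_unique {c c' : Fin n → ℝ}
    (h : ∑ i, c i • R.α i = ∑ i, c' i • R.α i) : c = c' := by
  funext i
  have h0 : ∑ i, (c i - c' i) • R.α i = 0 := by
    simp only [sub_smul, Finset.sum_sub_distrib, h, sub_self]
  have := Fintype.linearIndependent_iff.mp R.indep (fun i => c i - c' i) h0 i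
  linarith

lemma sum_ite_single (b : Fin n) (t : ℝ) :
    ∑ j, (if j = b then t else 0) • R.α j = t • R.α b := by
  rw [Finset.sum_eq_single b]
  · simp
  · intro j _ hj; simp [hj]
  · simp

lemma span_coeff_zero {S : Finset (Fin n)} {c : Fin n → ℝ}
    (h : ∑ i, c i • R.α i ∈ Submodule.span ℝ (R.α '' (S : Set (Fin n)))) :
    ∀ i ∉ S, c i = 0 := by
  rw [← Finset.coe_image, Submodule.mem_span_finset] at h
  obtain ⟨f, -, hf⟩ := h
  rw [Finset.sum_image (fun i _ j _ hij => R.indep.injective hij)] at hf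
  set c' : Fin n → ℝ := fun i => if i ∈ S then f (R.α i) else 0 with hc'
  have hS : ∑ i ∈ S, c' i • R.α i = ∑ i, c' i • R.α i :=
    Finset.sum_subset (Finset.subset_univ S) (fun i _ hi => by simp [hc', hi])
  have hrep : ∑ i, c' i • R.α i = ∑ i, c i • R.α i := by
    rw [← hS, ← hf]
    exact Finset.sum_congr rfl fun i hi => by simp [hc', hi]
  have := R.coeff_unique hrep
  intro i hi
  rw [← this]; simp [hc', hi]

lemma mem_span_of_coeff {S : Finset (Fin n)} {c : Fin n → ℝ}
    (h : ∀ i ∉ S, c i = 0) :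
    ∑ i, c i • R.α i ∈ Submodule.span ℝ (R.α '' (S : Set (Fin n))) := by
  rw [← Finset.sum_subset (Finset.subset_univ S) (fun i _ hi => by rw [h i hi, zero_smul])]
  exact Submodule.sum_mem _ fun i hi =>
    Submodule.smul_mem _ _ (Submodule.subset_span ⟨i, hi, rfl⟩)

lemma mem_posRoots {β : EV} :
    β ∈ R.posRoots ↔ β ∈ R.Φ ∧
      ∃ c : Fin n → ℤ, β = ∑ i, (c i : ℝ) • R.α i ∧ ∀ i, 0 ≤ c i :=
  Finset.mem_filter

lemma posRoots_of_coeff {β : EV} (hβ : β ∈ R.Φ) (c : Fin n → ℤ)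
    (hrep : β = ∑ i, (c i : ℝ) • R.α i) (i0 : Fin n) (hc : 0 < c i0) :
    β ∈ R.posRoots := by
  obtain ⟨c', hrep', hsign⟩ := R.base β hβ
  have hcc : (fun i => ((c i : ℝ))) = fun i => ((c' i : ℝ)) :=
    R.coeff_unique (by rw [← hrep, ← hrep'])
  have hcc' : c = c' := by
    funext i; exact_mod_cast congrFun hcc i
  rcases hsign with hpos | hneg
  · exact R.mem_posRoots.mpr ⟨hβ, c', hrep', hpos⟩
  · exfalso; rw [hcc'] at hc; exact absurd (hneg i0) (by omega)

lemma alpha_mem_posRoots (b : Fin n) : R.α b ∈ R.posRoots := by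
  refine R.mem_posRoots.mpr ⟨R.α_mem b, fun i => if i = b then 1 else 0, ?_, ?_⟩
  · rw [show ∑ i, (((if i = b then (1:ℤ) else 0) : ℤ) : ℝ) • R.α i
        = ∑ i, (if i = b then (1:ℝ) else 0) • R.α i by
      apply Finset.sum_congr rfl; intro i _; split <;> simp]
    rw [R.sum_ite_single b 1, one_smul]
  · intro i; dsimp only; split <;> omega

lemma parPos_subset (P : Finset (Fin n)) : R.parPos P ⊆ R.posRoots :=
  Finset.filter_subset _ _

lemma parPos_coeff {P : Finset (Fin n)} {γ : EV} (hγ : γ ∈ R.parPos P) :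
    ∃ c : Fin n → ℤ, γ = ∑ i, (c i : ℝ) • R.α i ∧ (∀ i, 0 ≤ c i) ∧
      ∀ i ∉ P, c i = 0 := by
  obtain ⟨hpos, hspan⟩ := Finset.mem_filter.mp hγ
  obtain ⟨hΦ, c, hrep, hnn⟩ := R.mem_posRoots.mp hpos
  refine ⟨c, hrep, hnn, fun i hi => ?_⟩
  have h0 := R.span_coeff_zero (c := fun i => ((c i : ℝ))) (by rw [← hrep]; exact hspan) i hi
  exact_mod_cast h0

lemma exists_smul_of_cs {x y : EV} (hy : y ≠ 0)
    (h : ⟪x, x⟫ * ⟪y, y⟫ ≤ ⟪x, y⟫ * ⟪x, y⟫) : ∃ t : ℝ, x = t • y := by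
  have ha : 0 < ⟪y, y⟫ := s16_inner_self_pos hy
  set t : ℝ := ⟪x, y⟫ / ⟪y, y⟫ with ht
  refine ⟨t, ?_⟩
  have hexp : ⟪x - t • y, x - t • y⟫ = ⟪x, x⟫ - 2 * t * ⟪x, y⟫ + t * t * ⟪y, y⟫ := by
    simp only [inner_sub_left, inner_sub_right, real_inner_smul_left, real_inner_smul_right,
      real_inner_comm y x]
    ring
  have hv : ⟪x - t • y, x - t • y⟫ ≤ 0 := by
    rw [hexp]
    have hBC : t * ⟪y, y⟫ = ⟪x, y⟫ := div_mul_cancel₀ _ ha.ne'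
    have h1 : (⟪x, x⟫ - 2 * t * ⟪x, y⟫ + t * t * ⟪y, y⟫) * ⟪y, y⟫
        = ⟪x, x⟫ * ⟪y, y⟫ - ⟪x, y⟫ * ⟪x, y⟫ := by
      linear_combination (t * ⟪y, y⟫ - ⟪x, y⟫) * hBC
    nlinarith [ha, h1, h]
  have h0 : x - t • y = 0 := inner_self_eq_zero.mp (le_antisymm hv real_inner_self_nonneg)
  rw [sub_eq_zero] at h0
  exact h0

variable (R : RootSystemBase n d)

lemma zpair_mul_le_three {x y : EV} (hx : x ∈ R.Φ) (hy : y ∈ R.Φ)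
    (hne : ∀ t : ℝ, x ≠ t • y) : ⌊rsPair x y⌋ * ⌊rsPair y x⌋ ≤ 3 := by
  have hxne := R.nonzero x hx
  have hyne := R.nonzero y hy
  have hax : 0 < ⟪x, x⟫ := s16_inner_self_pos hxne
  have hay : 0 < ⟪y, y⟫ := s16_inner_self_pos hyne
  have hcs : ⟪x, y⟫ * ⟪x, y⟫ < ⟪x, x⟫ * ⟪y, y⟫ := by
    by_contra hcon
    push_neg at hcon
    obtain ⟨t, ht⟩ := exists_smul_of_cs hyne (le_of_not_gt (fun hlt => absurd hcon (not_le.mpr hlt)))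
    exact hne t ht
  have hprod : rsPair x y * rsPair y x < 4 := by
    show 2 * ⟪x, y⟫ / ⟪y, y⟫ * (2 * ⟪y, x⟫ / ⟪x, x⟫) < 4
    rw [real_inner_comm x y, div_mul_div_comm]
    rw [div_lt_iff₀ (by positivity)]
    nlinarith [hcs, hax, hay, real_inner_comm x y]
  have hc : ((⌊rsPair x y⌋ * ⌊rsPair y x⌋ : ℤ) : ℝ) < 4 := by
    push_cast
    rw [R.zPair_cast hx hy, R.zPair_cast hy hx]
    exact hprod
  have : (⌊rsPair x y⌋ * ⌊rsPair y x⌋ : ℤ) < 4 := by exact_mod_cast hc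
  omega

lemma sub_mem_of_pos_pair {x y : EV} (hx : x ∈ R.Φ) (hy : y ∈ R.Φ)
    (hne : ∀ t : ℝ, x ≠ t • y) (hp : 0 < rsPair x y) : x - y ∈ R.Φ := by
  have hxne := R.nonzero x hx
  have hyne := R.nonzero y hy
  have hax : 0 < ⟪x, x⟫ := s16_inner_self_pos hxne
  have hay : 0 < ⟪y, y⟫ := s16_inner_self_pos hyne
  have hip : 0 < ⟪x, y⟫ := by
    rcases div_pos_iff.mp hp with ⟨h1, _⟩ | ⟨_, h2⟩
    · linarith
    · linarith
  have hq : 0 < rsPair y x := by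
    show 0 < 2 * ⟪y, x⟫ / ⟪x, x⟫
    rw [real_inner_comm x y]
    have : 0 < 2 * ⟪x, y⟫ := by linarith
    positivity
  have hp1 : 1 ≤ ⌊rsPair x y⌋ := by
    have h1 : (0 : ℝ) < ((⌊rsPair x y⌋ : ℤ) : ℝ) := by rw [R.zPair_cast hx hy]; exact hp
    have : (0 : ℤ) < ⌊rsPair x y⌋ := by exact_mod_cast h1
    omega
  have hq1 : 1 ≤ ⌊rsPair y x⌋ := by
    have h1 : (0 : ℝ) < ((⌊rsPair y x⌋ : ℤ) : ℝ) := by rw [R.zPair_cast hy hx]; exact hq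
    have : (0 : ℤ) < ⌊rsPair y x⌋ := by exact_mod_cast h1
    omega
  have hprod := R.zpair_mul_le_three hx hy hne
  have hone : ⌊rsPair x y⌋ = 1 ∨ ⌊rsPair y x⌋ = 1 := by
    by_contra hcon
    push_neg at hcon
    have h2 : 2 ≤ ⌊rsPair x y⌋ := by omega
    have h3 : 2 ≤ ⌊rsPair y x⌋ := by omega
    nlinarith
  rcases hone with h1 | h1
  · have h := R.reflClosed x hx y hy
    rw [← R.zPair_cast hx hy, h1] at h
    simpa using h
  · have h := R.reflClosed y hy x hx
    rw [← R.zPair_cast hy hx, h1] at h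
    simp only [Int.cast_one, one_smul] at h
    have := R.neg_mem h
    simpa [neg_sub] using this

lemma simple_pair_nonpos {i j : Fin n} (hij : i ≠ j) : rsPair (R.α i) (R.α j) ≤ 0 := by
  by_contra hp
  push_neg at hp
  have e1 : ∑ k, (if k = i then (1 : ℝ) else 0) • R.α k = R.α i := by
    rw [R.sum_ite_single i 1, one_smul]
  have hne : ∀ t : ℝ, R.α i ≠ t • R.α j := by
    intro t heq
    have e2 : ∑ k, (if k = j then t else 0) • R.α k = t • R.α j := R.sum_ite_single j t
    have hcu := R.coeff_unique (c := fun k => if k = i then 1 else 0)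
      (c' := fun k => if k = j then t else 0) (by rw [e1, e2, ← heq])
    have := congrFun hcu i
    simp [hij] at this
  have hsub := R.sub_mem_of_pos_pair (R.α_mem i) (R.α_mem j) hne hp
  obtain ⟨c, hrep, hsign⟩ := R.base _ hsub
  have e3 : ∑ k, ((if k = i then (1 : ℝ) else 0) - (if k = j then 1 else 0)) • R.α k
      = R.α i - R.α j := by
    simp only [sub_smul, Finset.sum_sub_distrib]
    rw [e1, R.sum_ite_single j 1, one_smul]
  have hcu := R.coeff_unique (c := fun k => ((c k : ℝ)))
    (c' := fun k => (if k = i then (1 : ℝ) else 0) - (if k = j then 1 else 0))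
    (by rw [e3, ← hrep])
  have hci : ((c i : ℝ)) = 1 := by have := congrFun hcu i; simpa [hij] using this
  have hcj : ((c j : ℝ)) = -1 := by
    have := congrFun hcu j
    simpa [hij.symm] using this
  have hci' : c i = 1 := by exact_mod_cast hci
  have hcj' : c j = -1 := by exact_mod_cast hcj
  rcases hsign with h | h
  · have := h j; omega
  · have := h i; omega

lemma exists_other_coeff {β : EV} (hβ : β ∈ R.posRoots) (b : Fin n) (hne : β ≠ R.α b) :
    ∃ c : Fin n → ℤ, β = ∑ i, ((c i : ℝ)) • R.α i ∧ (∀ i, 0 ≤ c i) ∧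
      ∃ i, i ≠ b ∧ 0 < c i := by
  obtain ⟨hΦ, c, hrep, hnn⟩ := R.mem_posRoots.mp hβ
  refine ⟨c, hrep, hnn, ?_⟩
  by_contra h
  push_neg at h
  have hz : ∀ i, i ≠ b → c i = 0 := fun i hi => by have h1 := h i hi; have h2 := hnn i; omega
  have hrep' : β = ((c b : ℝ)) • R.α b := by
    rw [hrep, Finset.sum_eq_single b]
    · intro i _ hi; rw [hz i hi]; simp
    · simp
  have hred := R.reduced (R.α b) (R.α_mem b) ((c b : ℝ)) (by rw [← hrep']; exact hΦ)
  rcases hred with h1 | h1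
  · apply hne
    rw [hrep', h1, one_smul]
  · have : ((c b : ℝ)) = -1 := h1
    have hcb : c b = -1 := by exact_mod_cast this
    have := hnn b
    omega

lemma sum_rsPair_posRoots (b : Fin n) :
    ∑ a ∈ R.posRoots, rsPair a (R.α b) = 2 := by
  have hpair : ∀ a : EV, rsPair (a - rsPair a (R.α b) • R.α b) (R.α b) = -rsPair a (R.α b) := by
    intro a
    rw [rsPair_eq_corootForm, map_sub, map_smul, smul_eq_mul, R.corootForm_alpha_self b,
      ← rsPair_eq_corootForm]
    ring
  rw [← Finset.add_sum_erase _ _ (R.alpha_mem_posRoots b), rsPair_self (R.alpha_ne_zero b)]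
  have hzero : ∑ a ∈ R.posRoots.erase (R.α b), rsPair a (R.α b) = 0 := by
    apply Finset.sum_involution (g := fun a _ => a - rsPair a (R.α b) • R.α b)
    · intro a _
      rw [hpair a]
      ring
    · intro a _ hfa heq
      apply hfa
      have h0 : rsPair a (R.α b) • R.α b = 0 := by rwa [sub_eq_self] at heq
      rcases smul_eq_zero.mp h0 with h | h
      · exact h
      · exact absurd h (R.alpha_ne_zero b)
    · intro a ha
      obtain ⟨hne, haP⟩ := Finset.mem_erase.mp ha
      have hΦa : a ∈ R.Φ := (R.mem_posRoots.mp haP).1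
      obtain ⟨c, hrep, hnn, i, hib, hic⟩ := R.exists_other_coeff haP b hne
      have hmemΦ : a - rsPair a (R.α b) • R.α b ∈ R.Φ :=
        R.reflClosed a hΦa (R.α b) (R.α_mem b)
      set p : ℤ := ⌊rsPair a (R.α b)⌋ with hpdef
      have hcast : ((p : ℤ) : ℝ) = rsPair a (R.α b) := R.zPair_cast hΦa (R.α_mem b)
      have hrep2 : a - rsPair a (R.α b) • R.α b
          = ∑ k, (((c k - if k = b then p else 0 : ℤ) : ℝ)) • R.α k := by
        push_cast
        simp only [sub_smul, Finset.sum_sub_distrib]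
        rw [← hrep, show ∑ k, (if k = b then ((p : ℝ)) else 0) • R.α k = ((p : ℝ)) • R.α b
            from by
          rw [show (fun k => (if k = b then ((p : ℝ)) else 0) • R.α k)
              = fun k => (if k = b then ((p : ℝ)) else 0) • R.α k from rfl]
          exact R.sum_ite_single b ((p : ℝ)), hcast]
      have hposmem : a - rsPair a (R.α b) • R.α b ∈ R.posRoots := by
        apply R.posRoots_of_coeff hmemΦ _ hrep2 i
        simp [hib, hic]
      refine Finset.mem_erase.mpr ⟨?_, hposmem⟩
      intro heq
      have e1 : ∑ k, (if k = b then (1 : ℝ) else 0) • R.α k = R.α b := by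
        rw [R.sum_ite_single b 1, one_smul]
      have hcu := R.coeff_unique
        (c := fun k => (((c k - if k = b then p else 0 : ℤ) : ℝ)))
        (c' := fun k => if k = b then (1 : ℝ) else 0)
        (by rw [e1, ← hrep2, heq])
      have := congrFun hcu i
      simp only [hib, if_neg hib] at this
      have : ((c i : ℝ)) = 0 := by simpa [hib] using this
      have : c i = 0 := by exact_mod_cast this
      omega
    · intro a _
      rw [hpair a]
      rw [neg_smul, sub_neg_eq_add]
      abel
  rw [hzero, add_zero]

lemma rsPair_sum_left (c : Fin n → ℝ) (γ : EV) :
    rsPair (∑ i, c i • R.α i) γ = ∑ i, c i * rsPair (R.α i) γ := by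
  rw [rsPair_eq_corootForm, map_sum]
  exact Finset.sum_congr rfl fun i _ => by rw [map_smul, smul_eq_mul, rsPair_eq_corootForm]

lemma mem_phi_of_parPos {P : Finset (Fin n)} {γ : EV} (hγ : γ ∈ R.parPos P) : γ ∈ R.Φ :=
  (R.mem_posRoots.mp (R.parPos_subset P hγ)).1

lemma parPos_pair_nonpos {P : Finset (Fin n)} {b : Fin n} (hb : b ∉ P) {γ : EV}
    (hγ : γ ∈ R.parPos P) : rsPair γ (R.α b) ≤ 0 := by
  obtain ⟨c, hrep, hnn, hz⟩ := R.parPos_coeff hγ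
  rw [hrep, R.rsPair_sum_left]
  apply Finset.sum_nonpos
  intro i _
  by_cases hiP : i ∈ P
  · have hib : i ≠ b := fun h => hb (h ▸ hiP)
    exact mul_nonpos_of_nonneg_of_nonpos (by exact_mod_cast hnn i) (R.simple_pair_nonpos hib)
  · rw [hz i hiP]
    simp

lemma parPos_nonprop {P : Finset (Fin n)} {b : Fin n} (hb : b ∉ P) {γ : EV}
    (hγ : γ ∈ R.parPos P) (k t : ℝ) : γ + k • R.α b ≠ t • R.α b := by
  intro heq
  have hγspan : γ ∈ Submodule.span ℝ (R.α '' (P : Set (Fin n))) := (Finset.mem_filter.mp hγ).2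
  have hγeq : γ = (t - k) • R.α b := by
    rw [sub_smul, ← heq]
    abel
  have halpha : R.α b ∉ Submodule.span ℝ (R.α '' (P : Set (Fin n))) :=
    R.indep.notMem_span_image hb
  by_cases htk : t - k = 0
  · rw [htk, zero_smul] at hγeq
    exact R.nonzero γ (R.mem_phi_of_parPos hγ) hγeq
  · apply halpha
    have hsm : (t - k)⁻¹ • γ = R.α b := by
      rw [hγeq, smul_smul, inv_mul_cancel₀ htk, one_smul]
    rw [← hsm]
    exact Submodule.smul_mem _ _ hγspan

lemma string_mem {P : Finset (Fin n)} {b : Fin n} (hb : b ∉ P) {γ : EV}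
    (hγ : γ ∈ R.parPos P) {m : ℤ} (hmval : rsPair γ (R.α b) = -(m : ℝ)) :
    ∀ k : ℤ, 1 ≤ k → k ≤ m → γ + ((k : ℝ)) • R.α b ∈ R.Φ := by
  have hΦγ : γ ∈ R.Φ := R.mem_phi_of_parPos hγ
  intro k hk1 hkm
  have hm1 : 1 ≤ m := le_trans hk1 hkm
  have hnpγ : ∀ t : ℝ, γ ≠ t • R.α b := by
    intro t h
    have := R.parPos_nonprop hb hγ 0 t
    rw [zero_smul, add_zero] at this
    exact this h
  have hfloor : ⌊rsPair γ (R.α b)⌋ = -m := by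
    rw [hmval]
    exact_mod_cast Int.floor_intCast (-m)
  have hipneg : ⟪γ, R.α b⟫ < 0 := by
    have hpos : 0 < ⟪R.α b, R.α b⟫ := s16_inner_self_pos (R.alpha_ne_zero b)
    have hneg : rsPair γ (R.α b) < 0 := by
      rw [hmval]
      have : (1 : ℝ) ≤ (m : ℝ) := by exact_mod_cast hm1
      linarith
    by_contra hc
    push_neg at hc
    have : 0 ≤ rsPair γ (R.α b) := by
      show 0 ≤ 2 * ⟪γ, R.α b⟫ / ⟪R.α b, R.α b⟫
      positivity
    linarith
  have hq : ⌊rsPair (R.α b) γ⌋ ≤ -1 := by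
    have hneg : rsPair (R.α b) γ < 0 := by
      show 2 * ⟪R.α b, γ⟫ / ⟪γ, γ⟫ < 0
      rw [real_inner_comm γ (R.α b)]
      have hγγ : 0 < ⟪γ, γ⟫ := s16_inner_self_pos (R.nonzero γ hΦγ)
      exact div_neg_of_neg_of_pos (by linarith) hγγ
    have h1 : ((⌊rsPair (R.α b) γ⌋ : ℤ) : ℝ) < 0 := by
      rw [R.zPair_cast (R.α_mem b) hΦγ]
      exact hneg
    have : (⌊rsPair (R.α b) γ⌋ : ℤ) < 0 := by exact_mod_cast h1
    omega
  have hprod := R.zpair_mul_le_three hΦγ (R.α_mem b) hnpγ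
  rw [hfloor] at hprod
  have hm3 : m ≤ 3 := by nlinarith
  have hpairj : ∀ j : ℝ, rsPair (γ + j • R.α b) (R.α b) = -(m : ℝ) + 2 * j := by
    intro j
    rw [rsPair_eq_corootForm, map_add, map_smul, smul_eq_mul, R.corootForm_alpha_self b,
      ← rsPair_eq_corootForm, hmval]
    ring
  have htop : γ + ((m : ℝ)) • R.α b ∈ R.Φ := by
    have h := R.reflClosed γ hΦγ (R.α b) (R.α_mem b)
    rw [hmval, neg_smul, sub_neg_eq_add] at h
    exact h
  have hdown : ∀ j : ℤ, γ + ((j : ℝ)) • R.α b ∈ R.Φ → m < 2 * j →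
      γ + (((j : ℝ)) - 1) • R.α b ∈ R.Φ := by
    intro j hj hpos
    have hposR : (m : ℝ) < 2 * (j : ℝ) := by exact_mod_cast hpos
    have hsub := R.sub_mem_of_pos_pair hj (R.α_mem b)
      (fun t => R.parPos_nonprop hb hγ ((j : ℝ)) t)
      (by rw [hpairj]; linarith)
    have heq : γ + ((j : ℝ)) • R.α b - R.α b = γ + (((j : ℝ)) - 1) • R.α b := by
      rw [sub_smul, one_smul]
      abel
    rwa [heq] at hsub
  interval_cases m <;> interval_cases k
  · simpa using htop
  · have h2 : γ + ((2 : ℝ)) • R.α b ∈ R.Φ := by exact_mod_cast htop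
    have := hdown 2 (by exact_mod_cast h2) (by norm_num)
    norm_num at this
    simpa using this
  · simpa using htop
  · have h3 : γ + ((3 : ℝ)) • R.α b ∈ R.Φ := by exact_mod_cast htop
    have h2 := hdown 3 (by exact_mod_cast h3) (by norm_num)
    norm_num at h2
    have h1 := hdown 2 (by exact_mod_cast h2) (by norm_num)
    norm_num at h1
    simpa using h1
  · have h3 : γ + ((3 : ℝ)) • R.α b ∈ R.Φ := by exact_mod_cast htop
    have h2 := hdown 3 (by exact_mod_cast h3) (by norm_num)
    norm_num at h2
    simpa using h2
  · simpa using htop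

lemma alpha_smul_span_false {P : Finset (Fin n)} {b : Fin n} (hb : b ∉ P) {t : ℝ}
    (ht : t ≠ 0) (h : t • R.α b ∈ Submodule.span ℝ (R.α '' (P : Set (Fin n)))) : False := by
  apply R.indep.notMem_span_image hb
  have h2 := Submodule.smul_mem _ t⁻¹ h
  rwa [smul_smul, inv_mul_cancel₀ ht, one_smul] at h2

lemma floor_pair_neg {P : Finset (Fin n)} {b : Fin n} {γ : EV} (hγ : γ ∈ R.parPos P) :
    rsPair γ (R.α b) = -(((-⌊rsPair γ (R.α b)⌋ : ℤ)) : ℝ) := by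
  have h := R.zPair_cast (R.mem_phi_of_parPos hγ) (R.α_mem b)
  push_cast
  linarith

lemma m_nonneg {P : Finset (Fin n)} {b : Fin n} (hb : b ∉ P) {γ : EV}
    (hγ : γ ∈ R.parPos P) : 0 ≤ -⌊rsPair γ (R.α b)⌋ := by
  have hle := R.parPos_pair_nonpos hb hγ
  have h1 : ((⌊rsPair γ (R.α b)⌋ : ℤ) : ℝ) ≤ 0 := by
    rw [R.zPair_cast (R.mem_phi_of_parPos hγ) (R.α_mem b)]
    exact hle
  have : (⌊rsPair γ (R.α b)⌋ : ℤ) ≤ 0 := by exact_mod_cast h1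
  omega

/-- The set `{α_b} ∪ {γ + k α_b : γ ∈ Φ_P⁺, 1 ≤ k ≤ -⟨γ, α_b^∨⟩}` of roots counted in `X_b`. -/
def strSet (P : Finset (Fin n)) (b : Fin n) : Finset (EuclideanSpace ℝ (Fin d)) :=
  insert (R.α b) ((R.parPos P).biUnion fun γ =>
    (Finset.Icc (1 : ℤ) (-⌊rsPair γ (R.α b)⌋)).image fun k : ℤ => γ + ((k : ℝ)) • R.α b)

lemma mem_strSet {P : Finset (Fin n)} {b : Fin n} {x : EV} :
    x ∈ R.strSet P b ↔ x = R.α b ∨ ∃ γ ∈ R.parPos P, ∃ k : ℤ,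
      (1 ≤ k ∧ k ≤ -⌊rsPair γ (R.α b)⌋) ∧ x = γ + ((k : ℝ)) • R.α b := by
  constructor
  · intro hx
    rcases Finset.mem_insert.mp hx with h | h
    · exact Or.inl h
    · obtain ⟨γ, hγ, hx2⟩ := Finset.mem_biUnion.mp h
      obtain ⟨k, hk, rfl⟩ := Finset.mem_image.mp hx2
      exact Or.inr ⟨γ, hγ, k, Finset.mem_Icc.mp hk, rfl⟩
  · rintro (rfl | ⟨γ, hγ, k, hk, rfl⟩)
    · exact Finset.mem_insert_self _ _
    · exact Finset.mem_insert_of_mem (Finset.mem_biUnion.mpr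
        ⟨γ, hγ, Finset.mem_image.mpr ⟨k, Finset.mem_Icc.mpr hk, rfl⟩⟩)

lemma strSet_subset {P : Finset (Fin n)} {b : Fin n} (hb : b ∉ P) :
    R.strSet P b ⊆ R.posRoots \ R.parPos P := by
  intro x hx
  rcases R.mem_strSet.mp hx with rfl | ⟨γ, hγ, k, ⟨hk1, hk2⟩, rfl⟩
  · refine Finset.mem_sdiff.mpr ⟨R.alpha_mem_posRoots b, fun hmem => ?_⟩
    exact R.indep.notMem_span_image hb (Finset.mem_filter.mp hmem).2
  · have hΦγ := R.mem_phi_of_parPos hγ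
    have hΦx : γ + ((k : ℝ)) • R.α b ∈ R.Φ :=
      R.string_mem hb hγ (R.floor_pair_neg hγ) k hk1 hk2
    obtain ⟨c, hrep, hnn, hz⟩ := R.parPos_coeff hγ
    have hrep2 : γ + ((k : ℝ)) • R.α b
        = ∑ i, (((c i + if i = b then k else 0 : ℤ)) : ℝ) • R.α i := by
      have hterm : ∀ i : Fin n, (((c i + if i = b then k else 0 : ℤ)) : ℝ) • R.α i
          = ((c i : ℝ)) • R.α i + (if i = b then ((k : ℝ)) else 0) • R.α i := by
        intro i
        by_cases h : i = b
        · simp only [h, if_pos rfl]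
          push_cast
          rw [add_smul]
        · simp only [if_neg h]
          push_cast
          rw [add_smul, zero_smul]
      rw [Finset.sum_congr rfl (fun i _ => hterm i), Finset.sum_add_distrib, ← hrep,
        R.sum_ite_single b ((k : ℝ))]
    refine Finset.mem_sdiff.mpr ⟨R.posRoots_of_coeff hΦx _ hrep2 b ?_, fun hmem => ?_⟩
    · have hcb := hz b hb
      show (0 : ℤ) < c b + if b = b then k else 0
      rw [hcb, if_pos rfl, zero_add]
      omega
    · have hspan := (Finset.mem_filter.mp hmem).2
      have hγspan := (Finset.mem_filter.mp hγ).2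
      have hsub : ((k : ℝ)) • R.α b ∈ Submodule.span ℝ (R.α '' (P : Set (Fin n))) := by
        have h2 := Submodule.sub_mem _ hspan hγspan
        have h3 : γ + ((k : ℝ)) • R.α b - γ = ((k : ℝ)) • R.α b := by abel
        rwa [h3] at h2
      have hk0 : ((k : ℝ)) ≠ 0 := by
        have : (k : ℤ) ≠ 0 := by omega
        exact_mod_cast this
      exact R.alpha_smul_span_false hb hk0 hsub

lemma strSet_coeff {P : Finset (Fin n)} {b : Fin n} (hb : b ∉ P) {x : EV}
    (hx : x ∈ R.strSet P b) :
    ∃ c : Fin n → ℝ, x = ∑ i, c i • R.α i ∧ 1 ≤ c b ∧ ∀ j, j ∉ P → j ≠ b → c j = 0 := by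
  rcases R.mem_strSet.mp hx with rfl | ⟨γ, hγ, k, ⟨hk1, _⟩, rfl⟩
  · refine ⟨fun i => if i = b then 1 else 0, ?_, by simp, fun j _ hj => by simp [hj]⟩
    rw [R.sum_ite_single b 1, one_smul]
  · obtain ⟨c, hrep, _, hz⟩ := R.parPos_coeff hγ
    refine ⟨fun i => ((c i : ℝ)) + (if i = b then ((k : ℝ)) else 0), ?_, ?_, ?_⟩
    · simp only [add_smul, Finset.sum_add_distrib]
      rw [← hrep, R.sum_ite_single b ((k : ℝ))]
    · have hcb := hz b hb
      simp only [hcb, if_pos rfl, Int.cast_zero, zero_add]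
      exact_mod_cast hk1
    · intro j hjP hjb
      dsimp only
      rw [hz j hjP]
      simp [hjb]

lemma strSet_card {P : Finset (Fin n)} {b : Fin n} (hb : b ∉ P) :
    (((R.strSet P b).card : ℕ) : ℤ) = 1 + ∑ γ ∈ R.parPos P, -⌊rsPair γ (R.α b)⌋ := by
  have hnot : R.α b ∉ (R.parPos P).biUnion (fun γ =>
      (Finset.Icc (1 : ℤ) (-⌊rsPair γ (R.α b)⌋)).image fun k : ℤ => γ + ((k : ℝ)) • R.α b) := by
    intro hmem
    obtain ⟨γ, hγ, h2⟩ := Finset.mem_biUnion.mp hmem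
    obtain ⟨k, _, heq⟩ := Finset.mem_image.mp h2
    exact R.parPos_nonprop hb hγ ((k : ℝ)) 1 (by rw [one_smul]; exact heq)
  have hdisj : ∀ γ₁ ∈ R.parPos P, ∀ γ₂ ∈ R.parPos P, γ₁ ≠ γ₂ →
      Disjoint ((Finset.Icc (1 : ℤ) (-⌊rsPair γ₁ (R.α b)⌋)).image fun k : ℤ => γ₁ + ((k : ℝ)) • R.α b)
        ((Finset.Icc (1 : ℤ) (-⌊rsPair γ₂ (R.α b)⌋)).image fun k : ℤ => γ₂ + ((k : ℝ)) • R.α b) := by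
    intro γ₁ hγ₁ γ₂ hγ₂ hne
    rw [Finset.disjoint_left]
    intro x hx hx'
    obtain ⟨k, _, rfl⟩ := Finset.mem_image.mp hx
    obtain ⟨k', _, heq⟩ := Finset.mem_image.mp hx'
    by_cases hkk : k' = k
    · subst hkk
      exact hne (add_right_cancel heq).symm
    · have hspan₁ := (Finset.mem_filter.mp hγ₁).2
      have hspan₂ := (Finset.mem_filter.mp hγ₂).2
      have h3 : γ₁ - γ₂ = ((k' : ℝ)) • R.α b - ((k : ℝ)) • R.α b :=
        calc γ₁ - γ₂ = (γ₁ + ((k : ℝ)) • R.α b) - (γ₂ + ((k : ℝ)) • R.α b) := by abel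
          _ = (γ₂ + ((k' : ℝ)) • R.α b) - (γ₂ + ((k : ℝ)) • R.α b) := by rw [heq]
          _ = ((k' : ℝ)) • R.α b - ((k : ℝ)) • R.α b := by abel
      have h4 : (((k' - k : ℤ)) : ℝ) • R.α b ∈ Submodule.span ℝ (R.α '' (P : Set (Fin n))) := by
        have h5 := Submodule.sub_mem _ hspan₁ hspan₂
        rw [h3] at h5
        have h6 : (((k' - k : ℤ)) : ℝ) • R.α b
            = ((k' : ℝ)) • R.α b - ((k : ℝ)) • R.α b := by
          push_cast
          rw [sub_smul]
        rwa [h6]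
      have hk0 : (((k' - k : ℤ)) : ℝ) ≠ 0 := by
        have : (k' - k : ℤ) ≠ 0 := by omega
        exact_mod_cast this
      exact R.alpha_smul_span_false hb hk0 h4
  have hinj : ∀ γ : EV, Set.InjOn (fun k : ℤ => γ + ((k : ℝ)) • R.α b)
      ((Finset.Icc (1 : ℤ) (-⌊rsPair γ (R.α b)⌋)) : Set ℤ) := by
    intro γ k _ k' _ h
    have h1 : ((k : ℝ)) • R.α b = ((k' : ℝ)) • R.α b := add_left_cancel h
    have h2 : (((k - k' : ℤ)) : ℝ) • R.α b = 0 := by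
      push_cast
      rw [sub_smul, h1, sub_self]
    rcases smul_eq_zero.mp h2 with h3 | h3
    · have : (k - k' : ℤ) = 0 := by exact_mod_cast h3
      omega
    · exact absurd h3 (R.alpha_ne_zero b)
  have hcard : (R.strSet P b).card
      = 1 + ∑ γ ∈ R.parPos P, (-⌊rsPair γ (R.α b)⌋).toNat := by
    rw [strSet, Finset.card_insert_of_notMem hnot, Finset.card_biUnion hdisj, Nat.add_comm]
    congr 1
    apply Finset.sum_congr rfl
    intro γ _
    rw [Finset.card_image_of_injOn (hinj γ), Int.card_Icc, add_sub_cancel_right]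
  have hsumcast : ((∑ γ ∈ R.parPos P, (-⌊rsPair γ (R.α b)⌋).toNat : ℕ) : ℤ)
      = ∑ γ ∈ R.parPos P, -⌊rsPair γ (R.α b)⌋ := by
    push_cast
    exact Finset.sum_congr rfl fun γ hγ => Int.toNat_of_nonneg (R.m_nonneg hb hγ)
  rw [hcard, Nat.cast_add, Nat.cast_one, hsumcast]

lemma floor_sum_eq {P : Finset (Fin n)} {b : Fin n} (hb : b ∉ P) :
    ⌊∑ a ∈ R.posRoots \ R.parPos P, rsPair a (R.α b)⌋
      = 2 + ∑ γ ∈ R.parPos P, -⌊rsPair γ (R.α b)⌋ := by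
  have hsum : ∑ a ∈ R.posRoots \ R.parPos P, rsPair a (R.α b)
      = ((2 + ∑ γ ∈ R.parPos P, -⌊rsPair γ (R.α b)⌋ : ℤ) : ℝ) := by
    rw [Finset.sum_sdiff_eq_sub (R.parPos_subset P), R.sum_rsPair_posRoots b]
    have h1 : ∑ γ ∈ R.parPos P, rsPair γ (R.α b)
        = ∑ γ ∈ R.parPos P, ((⌊rsPair γ (R.α b)⌋ : ℤ) : ℝ) :=
      Finset.sum_congr rfl fun γ hγ =>
        (R.zPair_cast (R.mem_phi_of_parPos hγ) (R.α_mem b)).symm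
    rw [h1]
    push_cast
    rw [Finset.sum_neg_distrib]
    ring
  rw [hsum, Int.floor_intCast]

end RootSystemBase

end Statement16Aux

/-- For any proper subset `Δ_P ⊊ Δ` of the simple roots,
`|Δ \\ Δ_P| · (gcd_{β ∈ Δ \\ Δ_P} (∑_{α ∈ Φ⁺ \\ Φ_{Δ_P}⁺} ⟨α, β^∨⟩) − 1) ≤ |Φ⁺ \\ Φ_{Δ_P}⁺|`. -/
theorem statement16 {n d : ℕ} (R : RootSystemBase n d) (P : Finset (Fin n))
    (hP : P ≠ Finset.univ) :
    ((Finset.univ \ P).card : ℤ) *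
        ((Finset.univ \ P).gcd
          (fun b => ⌊∑ a ∈ R.posRoots \ R.parPos P, rsPair a (R.α b)⌋) - 1)
      ≤ ((R.posRoots \ R.parPos P).card : ℤ) := by
    classical
  set I := Finset.univ \ P with hI
  set f : Fin n → ℤ := fun b => ⌊∑ a ∈ R.posRoots \ R.parPos P, rsPair a (R.α b)⌋ with hf
  have hbP : ∀ b ∈ I, b ∉ P := fun b hb => (Finset.mem_sdiff.mp hb).2
  have key : ∀ b ∈ I, I.gcd f - 1 ≤ (((R.strSet P b).card : ℕ) : ℤ) := by
    intro b hb
    have hb' := hbP b hb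
    have hfb : f b = 2 + ∑ γ ∈ R.parPos P, -⌊rsPair γ (R.α b)⌋ := R.floor_sum_eq hb'
    have hnn : 0 ≤ ∑ γ ∈ R.parPos P, -⌊rsPair γ (R.α b)⌋ :=
      Finset.sum_nonneg fun γ hγ => R.m_nonneg hb' hγ
    have hpos : 0 < f b := by rw [hfb]; linarith
    have hle : I.gcd f ≤ f b := Int.le_of_dvd hpos (Finset.gcd_dvd hb)
    rw [R.strSet_card hb']
    rw [hfb] at hle
    linarith
  have hdisjU : ∀ b ∈ I, ∀ b' ∈ I, b ≠ b' → Disjoint (R.strSet P b) (R.strSet P b') := by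
    intro b hb b' hb' hne
    rw [Finset.disjoint_left]
    intro x hx hx'
    obtain ⟨c, hrep, hcb, hcz⟩ := R.strSet_coeff (hbP b hb) hx
    obtain ⟨c', hrep', hcb', hcz'⟩ := R.strSet_coeff (hbP b' hb') hx'
    have hcc := R.coeff_unique (c := c) (c' := c') (by rw [← hrep, ← hrep'])
    have h0 := hcz' b (hbP b hb) hne
    rw [hcc, h0] at hcb
    linarith
  have hsubU : I.biUnion (fun b => R.strSet P b) ⊆ R.posRoots \ R.parPos P := by
    intro x hx
    obtain ⟨b, hb, hxb⟩ := Finset.mem_biUnion.mp hx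
    exact R.strSet_subset (hbP b hb) hxb
  have hcardU : (I.biUnion fun b => R.strSet P b).card = ∑ b ∈ I, (R.strSet P b).card :=
    Finset.card_biUnion hdisjU
  calc (I.card : ℤ) * (I.gcd f - 1) = ∑ _b ∈ I, (I.gcd f - 1) := by
        rw [Finset.sum_const, nsmul_eq_mul]
    _ ≤ ∑ b ∈ I, (((R.strSet P b).card : ℕ) : ℤ) := Finset.sum_le_sum key
    _ = (((∑ b ∈ I, (R.strSet P b).card : ℕ)) : ℤ) := by push_cast; rfl
    _ = (((I.biUnion fun b => R.strSet P b).card : ℕ) : ℤ) := by rw [hcardU]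
    _ ≤ ((R.posRoots \ R.parPos P).card : ℤ) := by
        exact_mod_cast Finset.card_le_card hsubU
end
end

section
/- Consider the classical Kostant game on the affine graph D̃_4, consisting of a central vertex v_0 adjacent to four peripheral vertices v_1, v_2, v_3, v_4, starting from the initial configuration (c_0, c_1, c_2, c_3, c_4) = (1,1,1,1,1). Then the game never terminates: for every m ∈ ℕ there exists a valid firing sequence of length m starting from this configuration, i.e., the game admits an infinite sequence of valid moves. -/
/-! The classical Kostant game on the affine graph `D̃₄`: a star graph with central vertex `0`
adjacent to the four peripheral vertices `1, 2, 3, 4`. -/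

/-- The neighbors of a vertex in the star graph `D̃₄`. -/
def nbrsD4 (v : Fin 5) : Finset (Fin 5) :=
  if v = 0 then {1, 2, 3, 4} else {0}

/-- Vertex `v` is sad in the configuration `c`: `c v < (1/2) ∑_{u ∈ N(v)} c u`. -/
def SadD4 (c : Fin 5 → ℤ) (v : Fin 5) : Prop :=
  2 * c v < ∑ u ∈ nbrsD4 v, c u

/-- Firing the vertex `v`: replace `c v` by `∑_{u ∈ N(v)} c u − c v`. -/
def fireD4 (c : Fin 5 → ℤ) (v : Fin 5) : Fin 5 → ℤ :=
  Function.update c v ((∑ u ∈ nbrsD4 v, c u) - c v)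

/-- `ValidD4From c l`: starting from the configuration `c`, the sequence `l` fires a sad
vertex at each step. -/
def ValidD4From : (Fin 5 → ℤ) → List (Fin 5) → Prop
  | _, [] => True
  | c, v :: l => SadD4 c v ∧ ValidD4From (fireD4 c v) l


def stB (b : ℤ) : Fin 5 → ℤ := fun v => if v = 0 then 2*b - 1 else b

lemma stB_one : stB 1 = fun _ => (1:ℤ) := by
  funext v
  fin_cases v <;> simp [stB]

lemma valid_prefix (c : Fin 5 → ℤ) (l1 l2 : List (Fin 5)) :
    ValidD4From c (l1 ++ l2) → ValidD4From c l1 := by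
  induction l1 generalizing c with
  | nil => intro _; trivial
  | cons v l ih => rintro ⟨h1, h2⟩; exact ⟨h1, ih _ h2⟩

lemma step (b : ℤ) (hb : 1 ≤ b) (l : List (Fin 5))
    (h : ValidD4From (stB (b+1)) l) :
    ValidD4From (stB b) ([0,1,2,3,4] ++ l) := by
  refine ⟨?_, ?_, ?_, ?_, ?_, ?_⟩
  · simp [SadD4, nbrsD4, stB, Finset.sum_insert, Finset.mem_insert]
    omega
  · simp [SadD4, nbrsD4, fireD4, stB, Function.update, Finset.sum_insert, Finset.mem_insert]
    omega
  · simp [SadD4, nbrsD4, fireD4, stB, Function.update, Finset.sum_insert, Finset.mem_insert]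
    omega
  · simp [SadD4, nbrsD4, fireD4, stB, Function.update, Finset.sum_insert, Finset.mem_insert]
    omega
  · simp [SadD4, nbrsD4, fireD4, stB, Function.update, Finset.sum_insert, Finset.mem_insert]
    omega
  · convert h using 2
    funext v
    fin_cases v <;>
      simp [fireD4, nbrsD4, stB, Function.update, Finset.sum_insert, Finset.mem_insert] <;> ring
    rfl

lemma any_len (n : ℕ) (b : ℤ) (hb : 1 ≤ b) :
    ∃ l : List (Fin 5), l.length = 5 * n ∧ ValidD4From (stB b) l := by
  induction n generalizing b with
  | zero => exact ⟨[], rfl, trivial⟩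
  | succ n ih =>
      obtain ⟨l, hl, hv⟩ := ih (b+1) (by omega)
      exact ⟨[0,1,2,3,4] ++ l, by simp [hl]; ring, step b hb l hv⟩

/-- The classical Kostant game on the affine graph `D̃₄`, started from the
configuration `(1,1,1,1,1)`, never terminates: there are valid firing sequences of every
length, i.e. the game admits an infinite sequence of valid moves. -/
theorem statement19 :
    ∀ m : ℕ, ∃ l : List (Fin 5), l.length = m ∧ ValidD4From (fun _ => 1) l := by
  intro m
  obtain ⟨l, hl, hv⟩ := any_len m 1 le_rfl
  refine ⟨l.take m, ?_, ?_⟩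
  · rw [List.length_take, hl]; omega
  · rw [← stB_one]
    exact valid_prefix _ _ _ (by rw [List.take_append_drop]; exact hv)
end
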